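/- Let k ≥ 1 and x_1,…,x_{2k-1} ∈ [0,1], and let Q(x_1,…,x_{2k-1}) = ℙ[y_i < x_i for at least k indices i], with y_1,…,y_{2k-1} i.i.d. uniform on [0,1]. Then Q(x_1,…,x_{2k-1}) ≥ σ_k(x_1,…,x_{2k-1}) − 2^{4k-2} · σ_k(x_1,…,x_{2k-1})^{(k+1)/k}. -/

import Mathlib

open MeasureTheory

def esymm (m ℓ : ℕ) (x : Fin m → ℝ) : ℝ :=
  ∑ I ∈ Finset.powersetCard ℓ (Finset.univ : Finset (Fin m)), ∏ i ∈ I, x i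

/-- `Q k x` is the probability that independent uniform random variables
`y i ∈ [0,1]` satisfy `y i < x i` for at least `k` indices `i`. -/
noncomputable def Q (k : ℕ) (x : Fin (2*k-1) → ℝ) : ℝ :=
  (volume {y : Fin (2*k-1) → ℝ |
      (∀ i, y i ∈ Set.Icc (0:ℝ) 1) ∧
        k ≤ (Finset.univ.filter (fun i => y i < x i)).card}).toReal

namespace QAux

open Finset

variable {n : ℕ}

/-- weight of an "exact pattern" `S`. -/
def w (x : Fin n → ℝ) (S : Finset (Fin n)) : ℝ :=
  (∏ i ∈ S, x i) * ∏ i ∈ Sᶜ, (1 - x i)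

lemma w_nonneg {x : Fin n → ℝ} (hx : ∀ i, x i ∈ Set.Icc (0:ℝ) 1)
    (S : Finset (Fin n)) : 0 ≤ w x S := by
  apply mul_nonneg
  · exact prod_nonneg fun i _ => (hx i).1
  · exact prod_nonneg fun i _ => by linarith [(hx i).2]

lemma inner_sum (x : Fin n → ℝ) (T : Finset (Fin n)) :
    ∑ S ∈ univ.filter (fun S : Finset (Fin n) => T ⊆ S), w x S = ∏ i ∈ T, x i := by
  classical
  have h1 : ∑ S ∈ univ.filter (fun S : Finset (Fin n) => T ⊆ S), w x S
      = ∑ U ∈ Tᶜ.powerset, w x (T ∪ U) := by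
    refine Finset.sum_nbij' (fun S => S \ T) (fun U => T ∪ U) ?_ ?_ ?_ ?_ ?_
    · intro S hS
      simp only [mem_filter, mem_univ, true_and] at hS
      simp only [mem_powerset]
      intro i hi
      simp only [mem_sdiff] at hi
      simpa [mem_compl] using hi.2
    · intro U _
      simp [Finset.subset_union_left]
    · intro S hS
      simp only [mem_filter, mem_univ, true_and] at hS
      exact Finset.union_sdiff_of_subset hS
    · intro U hU
      simp only [mem_powerset] at hU
      apply Finset.union_sdiff_cancel_left
      exact disjoint_compl_right.mono_right (le_iff_subset.mpr hU)
    · intro S hS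
      simp only [mem_filter, mem_univ, true_and] at hS
      rw [Finset.union_sdiff_of_subset hS]
  rw [h1]
  have h2 : ∀ U ∈ Tᶜ.powerset, w x (T ∪ U)
      = (∏ i ∈ T, x i) * ((∏ i ∈ U, x i) * ∏ i ∈ Tᶜ \ U, (1 - x i)) := by
    intro U hU
    simp only [mem_powerset] at hU
    have hd : Disjoint T U := disjoint_compl_right.mono_right (le_iff_subset.mpr hU)
    have hc : (T ∪ U)ᶜ = Tᶜ \ U := by
      ext i; simp [not_or]
    rw [w, Finset.prod_union hd, hc]; ring
  rw [Finset.sum_congr rfl h2, ← Finset.mul_sum, ← Finset.prod_add]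
  simp

lemma key_identity (x : Fin n → ℝ) (ℓ : ℕ) :
    esymm n ℓ x = ∑ S : Finset (Fin n), (Nat.choose S.card ℓ : ℝ) * w x S := by
  classical
  have h1 : ∀ S : Finset (Fin n),
      (Nat.choose S.card ℓ : ℝ) * w x S = ∑ _T ∈ Finset.powersetCard ℓ S, w x S := by
    intro S
    rw [Finset.sum_const, Finset.card_powersetCard, nsmul_eq_mul]
  calc esymm n ℓ x
      = ∑ T ∈ Finset.powersetCard ℓ (univ : Finset (Fin n)),
          ∑ S ∈ univ.filter (fun S : Finset (Fin n) => T ⊆ S), w x S := by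
        rw [esymm]
        exact Finset.sum_congr rfl fun T _ => (inner_sum x T).symm
    _ = ∑ S : Finset (Fin n), ∑ T ∈ Finset.powersetCard ℓ S, w x S := by
        rw [Finset.sum_comm']
        intro S T
        simp only [mem_filter, mem_univ, true_and, Finset.mem_powersetCard, subset_univ]
        tauto
    _ = ∑ S : Finset (Fin n), (Nat.choose S.card ℓ : ℝ) * w x S :=
        Finset.sum_congr rfl fun S _ => (h1 S).symm


def B (x : Fin n → ℝ) (S : Finset (Fin n)) : Set (Fin n → ℝ) :=
  Set.univ.pi fun i => if i ∈ S then Set.Ico (0:ℝ) (x i) else Set.Icc (x i) 1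

lemma B_meas (x : Fin n → ℝ) (S : Finset (Fin n)) : MeasurableSet (B x S) := by
  apply MeasurableSet.univ_pi
  intro i
  by_cases h : i ∈ S <;> simp [h, measurableSet_Ico, measurableSet_Icc]

lemma B_vol (x : Fin n → ℝ) (hx : ∀ i, x i ∈ Set.Icc (0:ℝ) 1) (S : Finset (Fin n)) :
    volume (B x S) = ENNReal.ofReal (w x S) := by
  classical
  rw [B, volume_pi_pi]
  have h1 : ∀ i : Fin n, volume (if i ∈ S then Set.Ico (0:ℝ) (x i) else Set.Icc (x i) 1)
      = ENNReal.ofReal (if i ∈ S then x i else 1 - x i) := by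
    intro i
    by_cases h : i ∈ S <;> simp [h, Real.volume_Ico, Real.volume_Icc]
  simp_rw [h1]
  rw [← ENNReal.ofReal_prod_of_nonneg (fun i _ => by
    by_cases h : i ∈ S <;> simp [h] <;> linarith [(hx i).1, (hx i).2])]
  congr 1
  rw [Finset.prod_ite, w]
  congr 1
  · apply Finset.prod_congr _ (fun _ _ => rfl)
    ext i; simp
  · apply Finset.prod_congr _ (fun _ _ => rfl)
    ext i; simp

lemma B_disj_aux (x : Fin n → ℝ) {S S' : Finset (Fin n)} {i : Fin n}
    (hi : i ∈ S) (hi' : i ∉ S') : Disjoint (B x S) (B x S') := by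
  rw [Set.disjoint_left]
  intro y hy hy'
  have h1 := hy i (Set.mem_univ i)
  have h2 := hy' i (Set.mem_univ i)
  simp only [hi, if_true] at h1
  simp only [hi', if_false] at h2
  exact absurd h1.2 (not_lt.mpr h2.1)

lemma volume_lower (x : Fin n → ℝ) (hx : ∀ i, x i ∈ Set.Icc (0:ℝ) 1) (k : ℕ) :
    ∑ S ∈ univ.filter (fun S : Finset (Fin n) => k ≤ S.card), w x S
      ≤ (volume {y : Fin n → ℝ |
          (∀ i, y i ∈ Set.Icc (0:ℝ) 1) ∧
            k ≤ (Finset.univ.filter (fun i => y i < x i)).card}).toReal := by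
  classical
  set T : Set (Fin n → ℝ) := {y : Fin n → ℝ |
      (∀ i, y i ∈ Set.Icc (0:ℝ) 1) ∧
        k ≤ (Finset.univ.filter (fun i => y i < x i)).card} with hT
  set 𝒮 := univ.filter (fun S : Finset (Fin n) => k ≤ S.card) with h𝒮
  have hdisj : (↑𝒮 : Set (Finset (Fin n))).PairwiseDisjoint (B x) := by
    intro S _ S' _ hne
    have : ∃ i, (i ∈ S ∧ i ∉ S') ∨ (i ∈ S' ∧ i ∉ S) := by
      by_contra h
      push_neg at h
      exact hne (Finset.ext fun i => by have := h i; tauto)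
    obtain ⟨i, hi | hi⟩ := this
    · exact B_disj_aux x hi.1 hi.2
    · exact (B_disj_aux x hi.1 hi.2).symm
  have hsub : (⋃ S ∈ 𝒮, B x S) ⊆ T := by
    intro y hy
    simp only [Set.mem_iUnion] at hy
    obtain ⟨S, hS, hyS⟩ := hy
    simp only [h𝒮, mem_coe, mem_filter, mem_univ, true_and] at hS
    constructor
    · intro i
      have := hyS i (Set.mem_univ i)
      by_cases h : i ∈ S
      · simp only [h, if_true] at this
        exact ⟨this.1, le_trans this.2.le (hx i).2⟩
      · simp only [h, if_false] at this
        exact ⟨le_trans (hx i).1 this.1, this.2⟩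
    · refine le_trans hS (Finset.card_le_card ?_)
      intro i hi
      have := hyS i (Set.mem_univ i)
      simp only [hi, if_true] at this
      simp [this.2]
  have hTfin : volume T ≠ ⊤ := by
    have h1 : T ⊆ Set.univ.pi fun _ : Fin n => Set.Icc (0:ℝ) 1 := by
      intro y hy i _
      exact hy.1 i
    have h2 : volume (Set.univ.pi fun _ : Fin n => Set.Icc (0:ℝ) 1) = 1 := by
      rw [volume_pi_pi]
      simp [Real.volume_Icc]
    exact ne_top_of_le_ne_top (by rw [h2]; exact ENNReal.one_ne_top) (measure_mono h1)
  have hkey : ∑ S ∈ 𝒮, ENNReal.ofReal (w x S) ≤ volume T := by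
    calc ∑ S ∈ 𝒮, ENNReal.ofReal (w x S)
        = ∑ S ∈ 𝒮, volume (B x S) := by
          exact Finset.sum_congr rfl fun S _ => (B_vol x hx S).symm
      _ = volume (⋃ S ∈ 𝒮, B x S) :=
          (measure_biUnion_finset hdisj fun S _ => B_meas x S).symm
      _ ≤ volume T := measure_mono hsub
  calc ∑ S ∈ 𝒮, w x S
      = (∑ S ∈ 𝒮, ENNReal.ofReal (w x S)).toReal := by
        rw [ENNReal.toReal_sum (fun S _ => ENNReal.ofReal_ne_top)]
        exact (Finset.sum_congr rfl fun S _ =>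
          (ENNReal.toReal_ofReal (w_nonneg hx S))).symm
    _ ≤ (volume T).toReal := ENNReal.toReal_mono hTfin hkey



lemma esymm_nonneg {x : Fin n → ℝ} (hx0 : ∀ i, 0 ≤ x i) (ℓ : ℕ) : 0 ≤ esymm n ℓ x :=
  Finset.sum_nonneg fun _T _ => Finset.prod_nonneg fun i _ => hx0 i

lemma prod_le_rpow {k : ℕ} (hk : 1 ≤ k) {x : Fin n → ℝ} (hx0 : ∀ i, 0 ≤ x i)
    {T : Finset (Fin n)} (hT : T.card = k + 1) :
    ∏ i ∈ T, x i ≤ (esymm n k x) ^ (((k:ℝ)+1)/(k:ℝ)) := by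
  classical
  set σ := esymm n k x with hσdef
  have hσ : 0 ≤ σ := esymm_nonneg hx0 k
  have ha : 0 ≤ ∏ i ∈ T, x i := Finset.prod_nonneg fun i _ => hx0 i
  have hstep : ∀ j ∈ T, ∏ i ∈ T.erase j, x i ≤ σ := by
    intro j hj
    apply Finset.single_le_sum (f := fun I : Finset (Fin n) => ∏ i ∈ I, x i)
      (fun I _ => Finset.prod_nonneg fun i _ => hx0 i)
    rw [Finset.mem_powersetCard]
    exact ⟨subset_univ _, by rw [Finset.card_erase_of_mem hj, hT, Nat.add_sub_cancel]⟩
  have hprod : (∏ i ∈ T, x i) ^ k = ∏ j ∈ T, ∏ i ∈ T.erase j, x i := by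
    have h1 : ∀ j ∈ T, ∏ i ∈ T.erase j, x i = ∏ i ∈ T, (if i = j then 1 else x i) := by
      intro j hj
      rw [← Finset.mul_prod_erase T _ hj, if_pos rfl, one_mul]
      exact (Finset.prod_congr rfl fun i hi => if_neg (Finset.ne_of_mem_erase hi)).symm
    rw [Finset.prod_congr rfl h1, Finset.prod_comm, ← Finset.prod_pow]
    apply Finset.prod_congr rfl
    intro i hi
    rw [← Finset.mul_prod_erase T _ hi, if_pos rfl, one_mul]
    rw [Finset.prod_congr rfl
      (fun j hj => if_neg (Ne.symm (Finset.ne_of_mem_erase hj)) :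
        ∀ j ∈ T.erase i, (if i = j then 1 else x i) = x i),
      Finset.prod_const, Finset.card_erase_of_mem hi, hT, Nat.add_sub_cancel]
  have hk' : (0:ℝ) < (k:ℝ) := by exact_mod_cast hk
  have key : (∏ i ∈ T, x i) ^ k ≤ σ ^ (k+1) := by
    rw [hprod]
    calc ∏ j ∈ T, ∏ i ∈ T.erase j, x i
        ≤ ∏ _j ∈ T, σ := Finset.prod_le_prod
          (fun j _ => Finset.prod_nonneg fun i _ => hx0 i) hstep
      _ = σ ^ (k+1) := by rw [Finset.prod_const, hT]
  have h2 := Real.rpow_le_rpow (pow_nonneg ha k) key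
    (le_of_lt (by positivity : (0:ℝ) < 1/(k:ℝ)))
  rw [← Real.rpow_natCast (∏ i ∈ T, x i) k, ← Real.rpow_natCast σ (k+1),
    ← Real.rpow_mul ha, ← Real.rpow_mul hσ, mul_one_div, mul_one_div,
    div_self (ne_of_gt hk'), Real.rpow_one] at h2
  have : ((k+1 : ℕ) : ℝ) / (k:ℝ) = ((k:ℝ)+1)/(k:ℝ) := by push_cast; ring
  rwa [this] at h2


end QAux

theorem Q_ge_esymm_sub (k : ℕ) (hk : 1 ≤ k) (x : Fin (2*k-1) → ℝ)
    (hx : ∀ i, x i ∈ Set.Icc (0:ℝ) 1) :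
    esymm (2*k-1) k x - (2:ℝ)^(4*(k:ℝ)-2) * (esymm (2*k-1) k x) ^ (((k:ℝ)+1)/(k:ℝ))
      ≤ Q k x := by
  classical
  have hx0 : ∀ i, 0 ≤ x i := fun i => (hx i).1
  set σ := esymm (2*k-1) k x with hσdef
  set τ := esymm (2*k-1) (k+1) x with hτdef
  have hσ0 : 0 ≤ σ := QAux.esymm_nonneg hx0 k
  have he0 : 0 ≤ σ ^ (((k:ℝ)+1)/(k:ℝ)) := Real.rpow_nonneg hσ0 _
  -- Step 1 : σ ≤ Q + (k+1) τ
  have h1 : σ ≤ Q k x + ((k:ℝ)+1) * τ := by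
    have hper : ∀ S : Finset (Fin (2*k-1)),
        (Nat.choose S.card k : ℝ) * QAux.w x S ≤
          (if k ≤ S.card then QAux.w x S else 0)
            + ((k:ℝ)+1) * ((Nat.choose S.card (k+1) : ℝ) * QAux.w x S) := by
      intro S
      have hw := QAux.w_nonneg hx S
      rcases lt_trichotomy S.card k with h | h | h
      · rw [Nat.choose_eq_zero_of_lt h, if_neg (not_le.mpr h)]
        have : (0:ℝ) ≤ (Nat.choose S.card (k+1) : ℝ) * QAux.w x S := by positivity
        push_cast
        nlinarith
      · rw [h, Nat.choose_self, if_pos le_rfl, Nat.choose_succ_self]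
        push_cast
        nlinarith
      · rw [if_pos h.le]
        have hnat : Nat.choose S.card k ≤ (k+1) * Nat.choose S.card (k+1) := by
          have h2 := Nat.choose_succ_right_eq S.card k
          calc Nat.choose S.card k
              ≤ Nat.choose S.card k * (S.card - k) :=
                Nat.le_mul_of_pos_right _ (by omega)
            _ = Nat.choose S.card (k+1) * (k+1) := h2.symm
            _ = (k+1) * Nat.choose S.card (k+1) := Nat.mul_comm _ _
        have hcast : (Nat.choose S.card k : ℝ)
            ≤ ((k:ℝ)+1) * (Nat.choose S.card (k+1) : ℝ) := by exact_mod_cast hnat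
        nlinarith [mul_le_mul_of_nonneg_right hcast hw]
    calc σ = ∑ S : Finset (Fin (2*k-1)), (Nat.choose S.card k : ℝ) * QAux.w x S :=
          QAux.key_identity x k
      _ ≤ ∑ S : Finset (Fin (2*k-1)),
            ((if k ≤ S.card then QAux.w x S else 0)
              + ((k:ℝ)+1) * ((Nat.choose S.card (k+1) : ℝ) * QAux.w x S)) :=
          Finset.sum_le_sum fun S _ => hper S
      _ = (∑ S ∈ Finset.univ.filter (fun S : Finset (Fin (2*k-1)) => k ≤ S.card),
              QAux.w x S)
            + ((k:ℝ)+1) * ∑ S : Finset (Fin (2*k-1)),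
              (Nat.choose S.card (k+1) : ℝ) * QAux.w x S := by
          rw [Finset.sum_add_distrib, Finset.sum_filter, Finset.mul_sum]
      _ ≤ Q k x + ((k:ℝ)+1) * τ := by
          have := QAux.volume_lower x hx k
          rw [hτdef, QAux.key_identity x (k+1)]
          exact add_le_add this le_rfl
  -- Step 2 : (k+1) τ ≤ 2^(4k-2) σ^((k+1)/k)
  have h2 : ((k:ℝ)+1) * τ ≤ (2:ℝ)^(4*(k:ℝ)-2) * σ ^ (((k:ℝ)+1)/(k:ℝ)) := by
    have hτle : τ ≤ (Nat.choose (2*k-1) (k+1) : ℝ) * σ ^ (((k:ℝ)+1)/(k:ℝ)) := by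
      rw [hτdef, esymm]
      calc ∑ T ∈ Finset.powersetCard (k+1) (Finset.univ : Finset (Fin (2*k-1))),
            ∏ i ∈ T, x i
          ≤ ∑ _T ∈ Finset.powersetCard (k+1) (Finset.univ : Finset (Fin (2*k-1))),
            σ ^ (((k:ℝ)+1)/(k:ℝ)) := by
            apply Finset.sum_le_sum
            intro T hT
            rw [Finset.mem_powersetCard] at hT
            exact QAux.prod_le_rpow hk hx0 hT.2
        _ = (Nat.choose (2*k-1) (k+1) : ℝ) * σ ^ (((k:ℝ)+1)/(k:ℝ)) := by
            rw [Finset.sum_const, Finset.card_powersetCard, Finset.card_univ,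
              Fintype.card_fin, nsmul_eq_mul]
    have hnat : (k+1) * Nat.choose (2*k-1) (k+1) ≤ 2^(4*k-2) := by
      have hc : Nat.choose (2*k-1) (k+1) ≤ 2^(2*k-1) := by
        rcases le_or_gt (k+1) (2*k-1) with h | h
        · calc Nat.choose (2*k-1) (k+1)
              ≤ ∑ m ∈ Finset.range (2*k-1+1), Nat.choose (2*k-1) m :=
                Finset.single_le_sum (fun i _ => Nat.zero_le _)
                  (Finset.mem_range.mpr (by omega))
            _ = 2^(2*k-1) := Nat.sum_range_choose (2*k-1)
        · rw [Nat.choose_eq_zero_of_lt h]; exact Nat.zero_le _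
      have hk1 : k+1 ≤ 2^(2*k-1) :=
        le_trans (Nat.lt_two_pow_self (n := k)) (Nat.pow_le_pow_right (by norm_num) (by omega))
      calc (k+1) * Nat.choose (2*k-1) (k+1)
          ≤ 2^(2*k-1) * 2^(2*k-1) := Nat.mul_le_mul hk1 hc
        _ = 2^(4*k-2) := by rw [← pow_add]; congr 1; omega
    have hpow : (2:ℝ)^(4*(k:ℝ)-2) = ((2^(4*k-2) : ℕ) : ℝ) := by
      have h42 : ((4*k-2 : ℕ) : ℝ) = 4*(k:ℝ)-2 := by
        have : (2:ℕ) ≤ 4*k := by omega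
        push_cast [Nat.cast_sub this]
        ring
      rw [← h42, Real.rpow_natCast]
      push_cast
      ring
    have hcast : ((k:ℝ)+1) * (Nat.choose (2*k-1) (k+1) : ℝ) ≤ ((2^(4*k-2) : ℕ) : ℝ) := by
      exact_mod_cast hnat
    calc ((k:ℝ)+1) * τ
        ≤ ((k:ℝ)+1) * ((Nat.choose (2*k-1) (k+1) : ℝ) * σ ^ (((k:ℝ)+1)/(k:ℝ))) := by
          apply mul_le_mul_of_nonneg_left hτle (by positivity)
      _ = (((k:ℝ)+1) * (Nat.choose (2*k-1) (k+1) : ℝ)) * σ ^ (((k:ℝ)+1)/(k:ℝ)) := by ring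
      _ ≤ ((2^(4*k-2) : ℕ) : ℝ) * σ ^ (((k:ℝ)+1)/(k:ℝ)) :=
          mul_le_mul_of_nonneg_right hcast he0
      _ = (2:ℝ)^(4*(k:ℝ)-2) * σ ^ (((k:ℝ)+1)/(k:ℝ)) := by rw [hpow]
  linarith
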